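/- arXiv:1910.04947 — 2 statements merged into one kernel-verified Lean document; each statement's English description precedes it below -/
import Mathlib

section
/- For every positive integer n and every divisor t of n, Σ_{divisors m of n with t | m} ξ_n(m) · φ(gcd(t, m/t)) / gcd(t, m/t) = 1 if t = n and 0 otherwise, where ξ_n(m) := (λ(n/m)/(n/m)) · (φ(gcd(m, n/m))/gcd(m, n/m)). -/
/-- `λ(k) = ∏_{p | k, p prime} (−p)` as a rational number. -/
noncomputable def lambdaFun (k : ℕ) : ℚ := ∏ p ∈ k.primeFactors, (-(p : ℚ))

noncomputable def trQ (g : ℕ) : ℚ := (Nat.totient g : ℚ) / (g : ℚ)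

lemma lambdaFun_mul {a b : ℕ} (ha : a ≠ 0) (hb : b ≠ 0) (h : Nat.Coprime a b) :
    lambdaFun (a * b) = lambdaFun a * lambdaFun b := by
  unfold lambdaFun
  rw [Nat.primeFactors_mul ha hb, Finset.prod_union (Nat.Coprime.disjoint_primeFactors h)]

lemma trQ_mul {a b : ℕ} (h : Nat.Coprime a b) : trQ (a * b) = trQ a * trQ b := by
  unfold trQ
  rw [Nat.totient_mul h]
  push_cast
  rw [div_mul_div_comm]

lemma gcd_mul_of_coprime (w u v : ℕ) (h : Nat.Coprime u v) :
    Nat.gcd w (u * v) = Nat.gcd w u * Nat.gcd w v := by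
  apply Nat.dvd_antisymm
  · have h1 : Nat.gcd (Nat.gcd w (u*v)) u ∣ Nat.gcd w u :=
      Nat.gcd_dvd_gcd_of_dvd_left u (Nat.gcd_dvd_left _ _)
    have h2 : Nat.gcd (Nat.gcd w (u*v)) v ∣ Nat.gcd w v :=
      Nat.gcd_dvd_gcd_of_dvd_left v (Nat.gcd_dvd_left _ _)
    exact dvd_trans (Nat.dvd_gcd_mul_gcd_iff_dvd_mul.mpr (Nat.gcd_dvd_right _ _))
      (mul_dvd_mul h1 h2)
  · have h1 : Nat.Coprime (Nat.gcd w u) (Nat.gcd w v) :=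
      Nat.Coprime.coprime_dvd_left (Nat.gcd_dvd_right _ _)
        (Nat.Coprime.coprime_dvd_right (Nat.gcd_dvd_right _ _) h)
    exact Nat.dvd_gcd (Nat.Coprime.mul_dvd_of_dvd_of_dvd h1 (Nat.gcd_dvd_left _ _)
      (Nat.gcd_dvd_left _ _)) (mul_dvd_mul (Nat.gcd_dvd_right _ _) (Nat.gcd_dvd_right _ _))

lemma gcd_split {a b x y u v : ℕ} (h : Nat.Coprime a b) (hx : x ∣ a) (hy : y ∣ b)
    (hu : u ∣ a) (hv : v ∣ b) : Nat.gcd (x * y) (u * v) = Nat.gcd x u * Nat.gcd y v := by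
  have huv : Nat.Coprime u v := Nat.Coprime.coprime_dvd_left hu (Nat.Coprime.coprime_dvd_right hv h)
  have h1 : Nat.gcd u y = 1 := Nat.Coprime.coprime_dvd_left hu (Nat.Coprime.coprime_dvd_right hy h)
  have h2 : Nat.gcd v x = 1 :=
    Nat.Coprime.coprime_dvd_left hv (Nat.Coprime.coprime_dvd_right hx h.symm)
  rw [gcd_mul_of_coprime _ _ _ huv, Nat.gcd_comm (x*y) u, gcd_mul_of_coprime u x y
      (Nat.Coprime.coprime_dvd_left hx (Nat.Coprime.coprime_dvd_right hy h)),
    h1, mul_one, Nat.gcd_comm (x*y) v, gcd_mul_of_coprime v x y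
      (Nat.Coprime.coprime_dvd_left hx (Nat.Coprime.coprime_dvd_right hy h)),
    h2, one_mul, Nat.gcd_comm u x, Nat.gcd_comm v y]

lemma sum_divisors_mul_coprime (f : ℕ → ℚ) {a b : ℕ} (h : Nat.Coprime a b) (ha : a ≠ 0)
    (hb : b ≠ 0) :
    ∑ d ∈ (a * b).divisors, f d = ∑ x ∈ a.divisors, ∑ y ∈ b.divisors, f (x * y) := by
  rw [← Finset.sum_product']
  refine Finset.sum_nbij' (i := fun d => (Nat.gcd d a, Nat.gcd d b)) (j := fun p => p.1 * p.2)
    ?_ ?_ ?_ ?_ ?_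
  · intro d hd
    simp only [Finset.mem_product, Nat.mem_divisors]
    exact ⟨⟨Nat.gcd_dvd_right d a, ha⟩, ⟨Nat.gcd_dvd_right d b, hb⟩⟩
  · intro p hp
    simp only [Finset.mem_product, Nat.mem_divisors] at hp
    exact Nat.mem_divisors.mpr ⟨mul_dvd_mul hp.1.1 hp.2.1, mul_ne_zero ha hb⟩
  · intro d hd
    exact (Nat.gcd_mul_gcd_eq_iff_dvd_mul_of_coprime h).mpr (Nat.mem_divisors.mp hd).1
  · intro p hp
    simp only [Finset.mem_product, Nat.mem_divisors] at hp
    obtain ⟨⟨hx, -⟩, hy, -⟩ := hp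
    have e1 : Nat.gcd (p.1 * p.2) (a * 1) = Nat.gcd p.1 a * Nat.gcd p.2 1 :=
      gcd_split h hx hy dvd_rfl (one_dvd b)
    have e2 : Nat.gcd (p.1 * p.2) (1 * b) = Nat.gcd p.1 1 * Nat.gcd p.2 b :=
      gcd_split h hx hy (one_dvd a) dvd_rfl
    simp only [mul_one, one_mul, Nat.gcd_one_right] at e1 e2
    simp only [e1, e2, Nat.gcd_eq_left hx, Nat.gcd_eq_left hy]
  · intro d hd
    rw [(Nat.gcd_mul_gcd_eq_iff_dvd_mul_of_coprime h).mpr (Nat.mem_divisors.mp hd).1]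

/-- `ξ_n(m) = (λ(n/m)/(n/m)) · (φ(gcd(m, n/m))/gcd(m, n/m))`. -/
noncomputable def xiFun (n m : ℕ) : ℚ :=
  (lambdaFun (n / m) / ((n / m : ℕ) : ℚ)) *
    ((Nat.totient (Nat.gcd m (n / m)) : ℚ) / (Nat.gcd m (n / m) : ℚ))

lemma xiFun_eq (n m : ℕ) :
    xiFun n m = lambdaFun (n / m) / ((n / m : ℕ) : ℚ) * trQ (Nat.gcd m (n / m)) := rfl

noncomputable def FF (n t d : ℕ) : ℚ := xiFun n (t * d) * trQ (Nat.gcd t d)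

lemma sum_reindex (n t : ℕ) (hn : 0 < n) (ht : t ∣ n) :
    (∑ m ∈ n.divisors.filter (fun m => t ∣ m),
        xiFun n m * ((Nat.totient (Nat.gcd t (m / t)) : ℚ) / (Nat.gcd t (m / t) : ℚ)))
      = ∑ d ∈ (n / t).divisors, FF n t d := by
  have ht0 : t ≠ 0 := by rintro rfl; simp at ht; omega
  refine Finset.sum_nbij' (i := fun m => m / t) (j := fun d => t * d) ?_ ?_ ?_ ?_ ?_
  · intro m hm
    simp only [Finset.mem_filter, Nat.mem_divisors] at hm
    obtain ⟨⟨hmn, -⟩, htm⟩ := hm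
    refine Nat.mem_divisors.mpr ⟨?_, ?_⟩
    · rw [Nat.dvd_div_iff_mul_dvd ht, Nat.mul_div_cancel' htm]
      exact hmn
    · exact (Nat.div_pos (Nat.le_of_dvd hn ht) (Nat.pos_of_ne_zero ht0)).ne'
  · intro d hd
    simp only [Nat.mem_divisors] at hd
    exact Finset.mem_filter.mpr ⟨Nat.mem_divisors.mpr
      ⟨(mul_dvd_mul_left t hd.1).trans (by rw [Nat.mul_div_cancel' ht]), hn.ne'⟩,
      Dvd.intro d rfl⟩
  · intro m hm
    simp only [Finset.mem_filter] at hm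
    exact Nat.mul_div_cancel' hm.2
  · intro d hd
    exact Nat.mul_div_cancel_left d (Nat.pos_of_ne_zero ht0)
  · intro m hm
    simp only [Finset.mem_filter] at hm
    rw [FF, Nat.mul_div_cancel' hm.2, trQ]

lemma coprime_of_dvd {a b x y : ℕ} (h : Nat.Coprime a b) (hx : x ∣ a) (hy : y ∣ b) :
    Nat.Coprime x y :=
  Nat.Coprime.coprime_dvd_left hx (Nat.Coprime.coprime_dvd_right hy h)

lemma FF_mult {a b t1 t2 d1 d2 : ℕ} (ha : 0 < a) (hb : 0 < b) (h : Nat.Coprime a b)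
    (ht1 : t1 ∣ a) (ht2 : t2 ∣ b) (hd1 : d1 ∣ a / t1) (hd2 : d2 ∣ b / t2) :
    FF (a * b) (t1 * t2) (d1 * d2) = FF a t1 d1 * FF b t2 d2 := by
  have hm1 : t1 * d1 ∣ a := (Nat.dvd_div_iff_mul_dvd ht1).mp hd1
  have hm2 : t2 * d2 ∣ b := (Nat.dvd_div_iff_mul_dvd ht2).mp hd2
  have hd1a : d1 ∣ a := dvd_trans hd1 (Nat.div_dvd_of_dvd ht1)
  have hd2b : d2 ∣ b := dvd_trans hd2 (Nat.div_dvd_of_dvd ht2)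
  have key : (t1 * t2) * (d1 * d2) = (t1 * d1) * (t2 * d2) := by ring
  have hdiv : (a * b) / ((t1 * d1) * (t2 * d2)) = (a / (t1 * d1)) * (b / (t2 * d2)) :=
    (Nat.div_mul_div_comm hm1 hm2).symm
  have hA0 : a / (t1 * d1) ≠ 0 := (Nat.div_pos (Nat.le_of_dvd ha hm1)
    (Nat.pos_of_dvd_of_pos hm1 ha)).ne'
  have hB0 : b / (t2 * d2) ≠ 0 := (Nat.div_pos (Nat.le_of_dvd hb hm2)
    (Nat.pos_of_dvd_of_pos hm2 hb)).ne'
  have hcop : Nat.Coprime (a / (t1 * d1)) (b / (t2 * d2)) :=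
    coprime_of_dvd h (Nat.div_dvd_of_dvd hm1) (Nat.div_dvd_of_dvd hm2)
  have hg1 : Nat.gcd ((t1 * d1) * (t2 * d2)) ((a / (t1 * d1)) * (b / (t2 * d2)))
      = Nat.gcd (t1 * d1) (a / (t1 * d1)) * Nat.gcd (t2 * d2) (b / (t2 * d2)) :=
    gcd_split h hm1 hm2 (Nat.div_dvd_of_dvd hm1) (Nat.div_dvd_of_dvd hm2)
  have hg2 : Nat.gcd (t1 * t2) (d1 * d2) = Nat.gcd t1 d1 * Nat.gcd t2 d2 :=
    gcd_split h ht1 ht2 hd1a hd2b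
  rw [FF, FF, FF, xiFun_eq, xiFun_eq, xiFun_eq, key, hdiv, hg1, hg2,
    lambdaFun_mul hA0 hB0 hcop,
    trQ_mul (coprime_of_dvd h ((Nat.gcd_dvd_right _ _).trans (Nat.div_dvd_of_dvd hm1))
      ((Nat.gcd_dvd_right _ _).trans (Nat.div_dvd_of_dvd hm2))),
    trQ_mul (coprime_of_dvd h ((Nat.gcd_dvd_left t1 d1).trans ht1)
      ((Nat.gcd_dvd_left t2 d2).trans ht2))]
  push_cast
  ring

lemma gcd_pow (p x y : ℕ) : Nat.gcd (p ^ x) (p ^ y) = p ^ min x y := by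
  rcases le_total x y with hc | hc
  · rw [min_eq_left hc, Nat.gcd_eq_left (pow_dvd_pow p hc)]
  · rw [min_eq_right hc, Nat.gcd_eq_right (pow_dvd_pow p hc)]

lemma trQ_pp {p : ℕ} (hp : p.Prime) (j : ℕ) :
    trQ (p ^ j) = if j = 0 then 1 else ((p : ℚ) - 1) / p := by
  rcases j with _ | j
  · simp [trQ]
  · have hP : (p : ℚ) ≠ 0 := Nat.cast_ne_zero.mpr hp.pos.ne'
    have hPj : (p : ℚ) ^ j ≠ 0 := pow_ne_zero _ hP
    rw [trQ, Nat.totient_prime_pow hp (Nat.succ_pos j)]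
    simp only [Nat.succ_ne_zero, if_false]
    push_cast [Nat.cast_sub hp.one_lt.le]
    rw [pow_succ, ← mul_div_mul_left ((p:ℚ)-1) (p:ℚ) hPj]

lemma LQ_pp {p : ℕ} (hp : p.Prime) (j : ℕ) :
    lambdaFun (p ^ j) / ((p ^ j : ℕ) : ℚ) = if j = 0 then 1 else -(p : ℚ) / (p : ℚ) ^ j := by
  rcases j with _ | j
  · simp [lambdaFun]
  · rw [lambdaFun, Nat.primeFactors_prime_pow (Nat.succ_ne_zero j) hp,
      Finset.prod_singleton]
    simp only [Nat.succ_ne_zero, if_false]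
    push_cast
    ring

lemma S_mult {a b t1 t2 : ℕ} (ha : 0 < a) (hb : 0 < b) (h : Nat.Coprime a b)
    (ht1 : t1 ∣ a) (ht2 : t2 ∣ b) :
    ∑ d ∈ ((a * b) / (t1 * t2)).divisors, FF (a * b) (t1 * t2) d
      = (∑ d ∈ (a / t1).divisors, FF a t1 d) * (∑ d ∈ (b / t2).divisors, FF b t2 d) := by
  have hA0 : a / t1 ≠ 0 := (Nat.div_pos (Nat.le_of_dvd ha ht1)
    (Nat.pos_of_dvd_of_pos ht1 ha)).ne'
  have hB0 : b / t2 ≠ 0 := (Nat.div_pos (Nat.le_of_dvd hb ht2)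
    (Nat.pos_of_dvd_of_pos ht2 hb)).ne'
  have hdd : (a * b) / (t1 * t2) = (a / t1) * (b / t2) := (Nat.div_mul_div_comm ht1 ht2).symm
  rw [hdd, sum_divisors_mul_coprime _
    (coprime_of_dvd h (Nat.div_dvd_of_dvd ht1) (Nat.div_dvd_of_dvd ht2)) hA0 hB0,
    Finset.sum_mul_sum]
  exact Finset.sum_congr rfl fun x hx => Finset.sum_congr rfl fun y hy =>
    FF_mult ha hb h ht1 ht2 (Nat.mem_divisors.mp hx).1 (Nat.mem_divisors.mp hy).1

lemma S_pp {p : ℕ} (hp : p.Prime) {b k : ℕ} (hbk : b ≤ k) :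
    ∑ d ∈ (p ^ k / p ^ b).divisors, FF (p ^ k) (p ^ b) d = if b = k then 1 else 0 := by
  have hP : (p : ℚ) ≠ 0 := Nat.cast_ne_zero.mpr hp.pos.ne'
  set P : ℚ := (p : ℚ) with hPdef
  set K := k - b with hK
  rw [Nat.pow_div hbk hp.pos, Nat.sum_divisors_prime_pow hp]
  have hFF : ∀ i ≤ K, FF (p ^ k) (p ^ b) (p ^ i) =
      (if i = K then 1 else -P / P ^ (K - i))
      * (if (b = 0 ∧ i = 0) ∨ i = K then 1 else (P - 1) / P)
      * (if b = 0 ∨ i = 0 then 1 else (P - 1) / P) := by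
    intro i hi
    rw [FF, xiFun_eq, ← pow_add, Nat.pow_div (by omega) hp.pos, gcd_pow, gcd_pow,
      LQ_pp hp, trQ_pp hp, trQ_pp hp]
    have e1 : k - (b + i) = K - i := by omega
    rw [e1]
    have c1 : (K - i = 0) ↔ i = K := by omega
    have c2 : (min (b + i) (K - i) = 0) ↔ ((b = 0 ∧ i = 0) ∨ i = K) := by omega
    have c3 : (min b i = 0) ↔ (b = 0 ∨ i = 0) := by omega
    simp only [c1, c2, c3]
    rfl
  rcases Nat.eq_or_lt_of_le hbk with heq | hlt
  · subst heq
    have hK0 : K = 0 := Nat.sub_self b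
    rw [if_pos rfl]
    simp only [Nat.sub_self, zero_add, Finset.sum_range_one]
    rw [hFF 0 (Nat.zero_le _)]
    simp [hK0]
  · rw [if_neg (by omega)]
    have hK1 : 1 ≤ K := by omega
    set W : ℚ := if b = 0 then 1 else (P - 1) / P with hW
    have hPK : (P : ℚ) ^ K ≠ 0 := pow_ne_zero _ hP
    have main : ∑ i ∈ Finset.range (K + 1), FF (p ^ k) (p ^ b) (p ^ i) * P ^ K = 0 := by
      rw [Finset.sum_range_succ, Finset.range_eq_Ico, Finset.sum_eq_sum_Ico_succ_bot hK1]
      have hmid : ∀ i ∈ Finset.Ico 1 K, FF (p ^ k) (p ^ b) (p ^ i) * P ^ K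
          = P ^ i * (-(P - 1) * W) := by
        intro i hi
        simp only [Finset.mem_Ico] at hi
        rw [hFF i (by omega)]
        have hiK : ¬ i = K := by omega
        have hne : ¬ ((b = 0 ∧ i = 0) ∨ i = K) := by omega
        have h3 : (if b = 0 ∨ i = 0 then (1:ℚ) else (P - 1) / P) = W := by
          have hiff : (b = 0 ∨ i = 0) ↔ b = 0 := by omega
          simp only [hiff, hW]
        rw [if_neg hiK, if_neg hne, h3]
        have hsplit : P ^ K = P ^ (K - i) * P ^ i := by
          rw [← pow_add]; congr 1; omega
        have hPKi : (P : ℚ) ^ (K - i) ≠ 0 := pow_ne_zero _ hP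
        rw [hsplit]
        field_simp
      rw [Finset.sum_congr rfl hmid]
      have h0 : FF (p ^ k) (p ^ b) (p ^ 0) * P ^ K = -P * W := by
        rw [hFF 0 (Nat.zero_le _)]
        have c1 : ¬ ((0:ℕ) = K) := by omega
        have hiff : ((b = 0 ∧ (0:ℕ) = 0) ∨ (0:ℕ) = K) ↔ b = 0 := by omega
        have h23 : (b = 0 ∨ (0:ℕ) = 0) := Or.inr rfl
        rw [if_neg c1, if_pos h23]
        simp only [Nat.sub_zero, hW]
        rcases eq_or_ne b 0 with hb0 | hb0
        · simp only [hb0, true_and, true_or, if_true, ite_true]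
          field_simp
        · simp [hb0, c1]
          field_simp
      have hKterm : FF (p ^ k) (p ^ b) (p ^ K) * P ^ K = W * P ^ K := by
        rw [hFF K le_rfl]
        have h3 : (if b = 0 ∨ K = 0 then (1:ℚ) else (P - 1) / P) = W := by
          have hiff : (b = 0 ∨ K = 0) ↔ b = 0 := by omega
          simp only [hiff, hW]
        rw [if_pos rfl, if_pos (Or.inr (rfl : K = K)), h3]
        ring
      rw [h0, hKterm, ← Finset.sum_mul]
      have geo : (∑ i ∈ Finset.Ico 1 K, P ^ i) * (P - 1) = P ^ K - P := by
        have e : ∑ i ∈ Finset.Ico 1 K, P ^ i = (∑ i ∈ Finset.range K, P ^ i) - 1 := by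
          rw [Finset.range_eq_Ico, Finset.sum_eq_sum_Ico_succ_bot hK1]
          simp
        rw [e, sub_mul, geom_sum_mul]
        ring
      linear_combination (-W) * geo
    rw [← Finset.sum_mul] at main
    rcases mul_eq_zero.mp main with h' | h'
    · exact h'
    · exact absurd h' hPK

lemma key_sum : ∀ n, 0 < n → ∀ t, t ∣ n →
    (∑ d ∈ (n / t).divisors, FF n t d) = if t = n then 1 else 0 := by
  intro n
  induction n using Nat.recOnPosPrimePosCoprime with
  | prime_pow p i hpp hi =>
    intro _ t ht
    obtain ⟨b, hb, rfl⟩ := (Nat.dvd_prime_pow hpp).mp ht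
    rw [S_pp hpp hb]
    have hiff : (p ^ b = p ^ i) ↔ (b = i) :=
      ⟨fun h => Nat.pow_right_injective hpp.two_le h, fun h => by rw [h]⟩
    simp only [hiff]
  | zero => intro h; exact absurd h (lt_irrefl 0)
  | one =>
    intro _ t ht
    rw [Nat.dvd_one.mp ht]
    norm_num [FF, xiFun_eq, trQ, lambdaFun]
  | coprime a b ha1 hb1 hab iha ihb =>
    intro _ t ht
    have ha : 0 < a := by omega
    have hb : 0 < b := by omega
    have ht1 : t.gcd a ∣ a := Nat.gcd_dvd_right t a
    have ht2 : t.gcd b ∣ b := Nat.gcd_dvd_right t b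
    have htt : t.gcd a * t.gcd b = t :=
      (Nat.gcd_mul_gcd_eq_iff_dvd_mul_of_coprime hab).mpr ht
    rw [← htt, S_mult ha hb hab ht1 ht2, iha ha _ ht1, ihb hb _ ht2]
    by_cases c1 : t.gcd a = a <;> by_cases c2 : t.gcd b = b
    · simp [c1, c2]
    · have : ¬ (t.gcd a * t.gcd b = a * b) := by
        intro hcon
        apply c2
        have h2 : t.gcd b ≤ b := Nat.le_of_dvd hb ht2
        have h1 : t.gcd a ≤ a := Nat.le_of_dvd ha ht1
        nlinarith [Nat.pos_of_dvd_of_pos ht1 ha, Nat.pos_of_dvd_of_pos ht2 hb]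
      simp [c1, c2, this, ha.ne', hb.ne']
    · have : ¬ (t.gcd a * t.gcd b = a * b) := by
        intro hcon
        apply c1
        have h2 : t.gcd b ≤ b := Nat.le_of_dvd hb ht2
        have h1 : t.gcd a ≤ a := Nat.le_of_dvd ha ht1
        nlinarith [Nat.pos_of_dvd_of_pos ht1 ha, Nat.pos_of_dvd_of_pos ht2 hb]
      simp [c1, c2, this, ha.ne', hb.ne']
    · have : ¬ (t.gcd a * t.gcd b = a * b) := by
        intro hcon
        apply c1
        have h2 : t.gcd b ≤ b := Nat.le_of_dvd hb ht2
        have h1 : t.gcd a ≤ a := Nat.le_of_dvd ha ht1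
        nlinarith [Nat.pos_of_dvd_of_pos ht1 ha, Nat.pos_of_dvd_of_pos ht2 hb]
      simp [c1, c2, this, ha.ne', hb.ne']

/-- For every positive integer `n` and every divisor `t` of `n`,
`Σ_{m | n, t | m} ξ_n(m) · φ(gcd(t, m/t))/gcd(t, m/t)` equals `1` if `t = n` and `0` otherwise. -/
theorem sum_xi_eq (n t : ℕ) (hn : 0 < n) (ht : t ∣ n) :
    (∑ m ∈ n.divisors.filter (fun m => t ∣ m),
        xiFun n m * ((Nat.totient (Nat.gcd t (m / t)) : ℚ) / (Nat.gcd t (m / t) : ℚ))) =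
      if t = n then 1 else 0 := by
  rw [sum_reindex n t hn ht]
  exact key_sum n hn t ht
end

section
/- For a positive integer n > 1, Σ_{m | n} ξ_n(m) = 0, where ξ_n(m) := (λ(n/m)/(n/m)) · (φ(gcd(m, n/m))/gcd(m, n/m)); for n = 1 the sum equals 1. -/
lemma lambdaFun_mul_s5 {a b : ℕ} (hab : a.Coprime b) :
    lambdaFun (a * b) = lambdaFun a * lambdaFun b := by
  unfold lambdaFun
  rw [hab.primeFactors_mul, Finset.prod_union hab.disjoint_primeFactors]

lemma gcd_pp (p a b : ℕ) : Nat.gcd (p ^ a) (p ^ b) = p ^ min a b := by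
  rcases le_total a b with h | h
  · rw [min_eq_left h, Nat.gcd_eq_left (pow_dvd_pow p h)]
  · rw [min_eq_right h, Nat.gcd_eq_right (pow_dvd_pow p h)]

lemma xiFun_mul {a b d e : ℕ} (hab : a.Coprime b) (hd : d ∣ a) (he : e ∣ b) :
    xiFun (a * b) (d * e) = xiFun a d * xiFun b e := by
  have had : a / d ∣ a := Nat.div_dvd_of_dvd hd
  have hbe : b / e ∣ b := Nat.div_dvd_of_dvd he
  have h1 : a * b / (d * e) = (a / d) * (b / e) := (Nat.div_mul_div_comm hd he).symm
  have hcop : (a / d).Coprime (b / e) :=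
    Nat.Coprime.coprime_dvd_left had (Nat.Coprime.coprime_dvd_right hbe hab)
  have hg : Nat.gcd (d * e) ((a / d) * (b / e)) = Nat.gcd d (a / d) * Nat.gcd e (b / e) := by
    rw [Nat.Coprime.gcd_mul _ hcop]
    congr 1
    · exact Nat.Coprime.gcd_mul_right_cancel d
        (Nat.Coprime.coprime_dvd_right had (Nat.Coprime.coprime_dvd_left he hab.symm))
    · exact Nat.Coprime.gcd_mul_left_cancel e
        (Nat.Coprime.coprime_dvd_right hbe (Nat.Coprime.coprime_dvd_left hd hab))
  have hgcop : (Nat.gcd d (a / d)).Coprime (Nat.gcd e (b / e)) :=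
    Nat.Coprime.coprime_dvd_left ((Nat.gcd_dvd_left _ _).trans hd)
      (Nat.Coprime.coprime_dvd_right ((Nat.gcd_dvd_left _ _).trans he) hab)
  unfold xiFun
  rw [h1, hg, lambdaFun_mul_s5 hcop, Nat.totient_mul hgcop]
  push_cast
  ring

lemma sum_xi_mul {a b : ℕ} (ha : a ≠ 0) (hb : b ≠ 0) (hab : a.Coprime b) :
    ∑ m ∈ (a * b).divisors, xiFun (a * b) m
      = (∑ m ∈ a.divisors, xiFun a m) * ∑ m ∈ b.divisors, xiFun b m := by
  rw [Finset.sum_mul_sum, ← Finset.sum_product']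
  refine (Finset.sum_nbij' (fun p : ℕ × ℕ => p.1 * p.2) (fun d => (d.gcd a, d.gcd b))
    ?_ ?_ ?_ ?_ ?_).symm
  · rintro ⟨d, e⟩ hde
    rw [Finset.mem_product, Nat.mem_divisors, Nat.mem_divisors] at hde
    exact Nat.mem_divisors.mpr ⟨mul_dvd_mul hde.1.1 hde.2.1, mul_ne_zero ha hb⟩
  · intro d hd
    rw [Nat.mem_divisors] at hd
    exact Finset.mem_product.mpr ⟨Nat.mem_divisors.mpr ⟨Nat.gcd_dvd_right _ _, ha⟩,
      Nat.mem_divisors.mpr ⟨Nat.gcd_dvd_right _ _, hb⟩⟩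
  · rintro ⟨d, e⟩ hde
    rw [Finset.mem_product, Nat.mem_divisors, Nat.mem_divisors] at hde
    have h1 : Nat.gcd (d * e) a = d := by
      rw [Nat.Coprime.gcd_mul_right_cancel d
        (Nat.Coprime.coprime_dvd_left hde.2.1 hab.symm), Nat.gcd_eq_left hde.1.1]
    have h2 : Nat.gcd (d * e) b = e := by
      rw [Nat.Coprime.gcd_mul_left_cancel e
        (Nat.Coprime.coprime_dvd_left hde.1.1 hab), Nat.gcd_eq_left hde.2.1]
    simp [h1, h2]
  · intro d hd
    rw [Nat.mem_divisors] at hd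
    simp only
    rw [← Nat.Coprime.gcd_mul d hab, Nat.gcd_eq_left hd.1]
  · rintro ⟨d, e⟩ hde
    rw [Finset.mem_product, Nat.mem_divisors, Nat.mem_divisors] at hde
    exact (xiFun_mul hab hde.1.1 hde.2.1).symm

lemma sum_xi_prime_pow {p k : ℕ} (hp : p.Prime) (hk : 0 < k) :
    ∑ m ∈ (p ^ k).divisors, xiFun (p ^ k) m = 0 := by
  have hc : (p : ℚ) ≠ 0 := Nat.cast_ne_zero.mpr hp.pos.ne'
  set c : ℚ := (p : ℚ) with hcdef
  have key : ∀ j < k, xiFun (p ^ k) (p ^ j)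
      = (c ^ j / c ^ k - c ^ (j + 1) / c ^ k) - (if j = 0 then 1 / c ^ k else 0) := by
    intro j hj
    have hjk : j ≤ k := hj.le
    unfold xiFun
    rw [Nat.pow_div hjk hp.pos, gcd_pp]
    have hkj : 1 ≤ k - j := by omega
    have hlam : lambdaFun (p ^ (k - j)) = -c := by
      unfold lambdaFun
      rw [Nat.primeFactors_prime_pow (by omega) hp, Finset.prod_singleton]
    have hck : c ^ k = c ^ (k - j) * c ^ j := by rw [← pow_add]; congr 1; omega
    rcases Nat.eq_zero_or_pos j with rfl | hj1
    · rw [hlam]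
      simp only [pow_zero, Nat.min_eq_left (Nat.zero_le _), Nat.totient_one,
        if_pos rfl, Nat.sub_zero]
      push_cast
      rw [hck]
      simp only [Nat.sub_zero, pow_zero, mul_one]
      field_simp
      ring
    · have hmin : 1 ≤ min j (k - j) := le_min hj1 hkj
      set t := min j (k - j) with ht
      have htot : (Nat.totient (p ^ t) : ℚ) = c ^ (t - 1) * (c - 1) := by
        rw [Nat.totient_prime_pow hp hmin]
        push_cast [Nat.cast_sub hp.one_le]
        ring
      have hctt : c ^ t = c ^ (t - 1) * c := by
        rw [← pow_succ]; congr 1; omega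
      rw [hlam, htot, if_neg hj1.ne']
      push_cast
      rw [hck, hctt]
      have h1 : c ^ (k - j) ≠ 0 := pow_ne_zero _ hc
      have h2 : c ^ (t - 1) ≠ 0 := pow_ne_zero _ hc
      have h3 : c ^ j ≠ 0 := pow_ne_zero _ hc
      field_simp
      have hX : c ^ (k - j) * ((p : ℚ))⁻¹ ^ (k - j) = 1 := by
        rw [← mul_pow, hcdef, mul_inv_cancel₀ (Nat.cast_ne_zero.mpr hp.pos.ne'), one_pow]
      linear_combination (-(c * c ^ j) + c ^ j) * hX
  have last : xiFun (p ^ k) (p ^ k) = 1 := by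
    unfold xiFun
    rw [Nat.div_self (pow_pos hp.pos k)]
    simp [lambdaFun]
  rw [Nat.divisors_prime_pow hp, Finset.sum_map]
  simp only [Function.Embedding.coeFn_mk]
  rw [Finset.sum_range_succ, last,
    Finset.sum_congr rfl (fun j hj => key j (Finset.mem_range.mp hj)),
    Finset.sum_sub_distrib, Finset.sum_range_sub' (fun j => c ^ j / c ^ k) k,
    Finset.sum_ite_eq' (Finset.range k) 0 (fun _ => 1 / c ^ k),
    if_pos (Finset.mem_range.mpr hk)]
  have : c ^ k ≠ 0 := pow_ne_zero _ hc
  field_simp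
  ring

/-- For `n > 1`, `Σ_{m | n} ξ_n(m) = 0`; for `n = 1` the sum equals `1`. -/
theorem sum_xi_total (n : ℕ) (hn : 0 < n) :
    (∑ m ∈ n.divisors, xiFun n m) = if n = 1 then 1 else 0 := by
  revert hn
  induction n using Nat.recOnPosPrimePosCoprime with
  | prime_pow p k hpp hk =>
    intro _
    have hp' : p.Prime := hpp
    rw [if_neg (Nat.one_lt_pow hk.ne' hp'.one_lt).ne', sum_xi_prime_pow hp' hk]
  | zero => intro h; exact absurd h (lt_irrefl 0)
  | one => intro _; simp [xiFun, lambdaFun]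
  | coprime a b ha hb hab Pa Pb =>
    intro _
    have h1 : 1 < a * b := by
      calc 1 < a := ha
      _ ≤ a * b := Nat.le_mul_of_pos_right a (by omega)
    rw [sum_xi_mul (by omega) (by omega) hab, Pa (by omega), Pb (by omega),
      if_neg ha.ne', if_neg hb.ne', if_neg h1.ne']
    ring
end
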